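/- For all real numbers x and y, |2·artanh(tanh(x/2)·tanh(y/2))| ≤ min(|x|, |y|). -/

import Mathlib

/-- Inverse hyperbolic tangent on `(-1,1)`: `artanh z = (1/2)·ln((1+z)/(1-z))`. -/
noncomputable def artanh (z : ℝ) : ℝ := (1/2) * Real.log ((1 + z) / (1 - z))

lemma one_add_tanh (u : ℝ) : 1 + Real.tanh u = Real.exp u / Real.cosh u := by
  rw [Real.tanh_eq_sinh_div_cosh]
  field_simp [(Real.cosh_pos u).ne']
  exact Real.cosh_add_sinh u

lemma one_sub_tanh (u : ℝ) : 1 - Real.tanh u = Real.exp (-u) / Real.cosh u := by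
  rw [Real.tanh_eq_sinh_div_cosh]
  field_simp [(Real.cosh_pos u).ne']
  exact Real.cosh_sub_sinh u

lemma artanh_tanh (u : ℝ) : artanh (Real.tanh u) = u := by
  unfold artanh
  rw [one_add_tanh, one_sub_tanh]
  have h1 : Real.exp u / Real.cosh u / (Real.exp (-u) / Real.cosh u) = Real.exp (u - -u) := by
    rw [Real.exp_sub]; field_simp
  rw [h1, Real.log_exp]; ring

lemma tanh_lt_one (u : ℝ) : Real.tanh u < 1 := by
  rw [Real.tanh_eq_sinh_div_cosh, div_lt_one (Real.cosh_pos u)]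
  nlinarith [Real.cosh_sub_sinh u, Real.exp_pos (-u)]

lemma tanh_nonneg {u : ℝ} (hu : 0 ≤ u) : 0 ≤ Real.tanh u := by
  rw [Real.tanh_eq_sinh_div_cosh]
  exact div_nonneg (Real.sinh_nonneg_iff.mpr hu) (Real.cosh_pos u).le

lemma abs_tanh (u : ℝ) : |Real.tanh u| = Real.tanh |u| := by
  rcases abs_cases u with ⟨h, h'⟩ | ⟨h, h'⟩
  · rw [h, abs_of_nonneg (tanh_nonneg h')]
  · rw [h, Real.tanh_neg, abs_of_nonpos]
    nlinarith [tanh_nonneg (neg_nonneg.mpr h'.le), Real.tanh_neg u]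

lemma artanh_nonneg {z : ℝ} (h0 : 0 ≤ z) (h1 : z < 1) : 0 ≤ artanh z := by
  unfold artanh
  have : (1 : ℝ) ≤ (1 + z) / (1 - z) := by
    rw [le_div_iff₀ (by linarith)]; linarith
  have := Real.log_nonneg this
  linarith

lemma artanh_mono {s t : ℝ} (h0 : 0 ≤ s) (hst : s ≤ t) (h1 : t < 1) :
    artanh s ≤ artanh t := by
  unfold artanh
  have hlog : Real.log ((1 + s) / (1 - s)) ≤ Real.log ((1 + t) / (1 - t)) := by
    apply Real.log_le_log (by apply div_pos <;> linarith)
    rw [div_le_div_iff₀ (by linarith) (by linarith)]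
    nlinarith
  linarith

lemma artanh_neg (z : ℝ) : artanh (-z) = -artanh z := by
  unfold artanh
  have : (1 + -z) / (1 - -z) = ((1 + z) / (1 - z))⁻¹ := by
    rw [inv_div]; ring_nf
  rw [this, Real.log_inv]; ring

lemma abs_artanh {z : ℝ} (h1 : |z| < 1) : |artanh z| = artanh |z| := by
  rcases abs_cases z with ⟨h, h'⟩ | ⟨h, h'⟩
  · rw [h, abs_of_nonneg (artanh_nonneg h' (h ▸ h1))]
  · rw [h, artanh_neg, abs_of_nonpos]
    have := artanh_nonneg (neg_nonneg.mpr h'.le) (h ▸ h1)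
    rw [artanh_neg] at this; linarith

theorem boxplus_le_min (x y : ℝ) :
    |2 * artanh (Real.tanh (x/2) * Real.tanh (y/2))| ≤ min |x| |y| := by
  set a := Real.tanh (x/2)
  set b := Real.tanh (y/2)
  have hax : |a| = Real.tanh (|x|/2) := by rw [abs_tanh, abs_div]; norm_num
  have hby : |b| = Real.tanh (|y|/2) := by rw [abs_tanh, abs_div]; norm_num
  have ha1 : |a| < 1 := hax ▸ tanh_lt_one _
  have hb1 : |b| < 1 := hby ▸ tanh_lt_one _
  have ha0 : 0 ≤ |a| := abs_nonneg _
  have hb0 : 0 ≤ |b| := abs_nonneg _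
  have habs : |a * b| < 1 := by
    rw [abs_mul]; nlinarith
  have key : ∀ u : ℝ, 0 ≤ u → |a * b| ≤ Real.tanh u → |2 * artanh (a * b)| ≤ 2 * u := by
    intro u hu hle
    rw [abs_mul, abs_two, abs_artanh habs]
    have := artanh_mono (abs_nonneg (a*b)) hle (tanh_lt_one u)
    rw [artanh_tanh] at this
    linarith
  have hx : |2 * artanh (a * b)| ≤ |x| := by
    have := key (|x|/2) (by positivity) (by rw [← hax, abs_mul]; nlinarith)
    linarith
  have hy : |2 * artanh (a * b)| ≤ |y| := by
    have := key (|y|/2) (by positivity) (by rw [← hby, abs_mul]; nlinarith)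
    linarith
  exact le_min hx hy
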